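/- Let α, β ∈ PSL(2,ℂ) be two distinct elements of order 2 that commute. Then for any lifts α̃, β̃ of α, β to SL(2,ℂ), the commutator [α̃, β̃] equals −Id. -/

import Mathlib

abbrev SL2C := Matrix.SpecialLinearGroup (Fin 2) ℂ
abbrev PSL2C := SL2C ⧸ Subgroup.center SL2C

instance : Fact (Even (Fintype.card (Fin 2))) := ⟨by norm_num⟩

namespace SL2Caux

open Matrix

lemma diagonal_neg_one :
    (Matrix.diagonal (fun _ : Fin 2 => (-1 : ℂ))) = -1 := by
  ext i j
  fin_cases i <;> fin_cases j <;>
    simp [Matrix.diagonal_apply, Matrix.one_apply, Matrix.neg_apply]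

/-- The center of SL(2,ℂ) is {±1}. -/
lemma center_cases {Z : SL2C} (h : Z ∈ Subgroup.center SL2C) : Z = 1 ∨ Z = -1 := by
  obtain ⟨r, hr, hs⟩ := Matrix.SpecialLinearGroup.mem_center_iff.mp h
  simp only [Fintype.card_fin] at hr
  have h0 : (r - 1) * (r + 1) = 0 := by linear_combination hr
  rcases mul_eq_zero.mp h0 with h1 | h1
  · left
    apply Subtype.ext
    rw [← hs, sub_eq_zero.mp h1]
    simp
  · right
    apply Subtype.ext
    have hrn : r = -1 := by linear_combination h1
    rw [← hs, hrn]
    simp only [Matrix.SpecialLinearGroup.coe_neg, Matrix.scalar_apply]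
    rw [diagonal_neg_one]
    simp

lemma neg_one_mem_center : (-1 : SL2C) ∈ Subgroup.center SL2C := by
  refine Matrix.SpecialLinearGroup.mem_center_iff.mpr ⟨-1, by norm_num, ?_⟩
  simp only [Matrix.scalar_apply]
  rw [diagonal_neg_one]
  simp [Matrix.SpecialLinearGroup.coe_neg]

lemma mk_neg (A : SL2C) : (QuotientGroup.mk (-A) : PSL2C) = QuotientGroup.mk A := by
  have h : (-A : SL2C) = (-1) * A := by rw [neg_one_mul]
  rw [h]
  rw [show ((QuotientGroup.mk ((-1) * A) : PSL2C)) = QuotientGroup.mk (-1 : SL2C) * QuotientGroup.mk A from rfl]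
  rw [(QuotientGroup.eq_one_iff (-1 : SL2C)).mpr neg_one_mem_center, one_mul]

/-- entries of a matrix equation -/
lemma entry_eq {M N : Matrix (Fin 2) (Fin 2) ℂ} (h : M = N) (i j : Fin 2) : M i j = N i j := by
  rw [h]

/-- If A² = 1 in SL(2,ℂ) then A = ±1. -/
lemma sq_eq_one {A : SL2C} (h : A ^ 2 = 1) : A = 1 ∨ A = -1 := by
  have hm : (A : Matrix (Fin 2) (Fin 2) ℂ) * A = 1 := by
    have := congrArg (Subtype.val) h
    simpa [pow_two] using this
  set a := (A : Matrix (Fin 2) (Fin 2) ℂ) 0 0 with ha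
  set b := (A : Matrix (Fin 2) (Fin 2) ℂ) 0 1 with hb
  set c := (A : Matrix (Fin 2) (Fin 2) ℂ) 1 0 with hc
  set d := (A : Matrix (Fin 2) (Fin 2) ℂ) 1 1 with hd
  have hdet : a * d - b * c = 1 := by
    have := A.2
    rwa [Matrix.det_fin_two] at this
  have e00 : a * a + b * c = 1 := by
    have := entry_eq hm 0 0
    simpa [Matrix.mul_apply, Fin.sum_univ_two, Matrix.one_apply] using this
  have e01 : a * b + b * d = 0 := by
    have := entry_eq hm 0 1
    simpa [Matrix.mul_apply, Fin.sum_univ_two, Matrix.one_apply] using this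
  have e10 : c * a + d * c = 0 := by
    have := entry_eq hm 1 0
    simpa [Matrix.mul_apply, Fin.sum_univ_two, Matrix.one_apply] using this
  have htr : a + d ≠ 0 := by
    intro h0
    have hd' : d = -a := by linear_combination h0
    rw [hd'] at hdet
    have h2 : (0 : ℂ) = 2 := by linear_combination hdet + e00
    norm_num at h2
  have hb0 : b = 0 := by
    rcases mul_eq_zero.mp (show b * (a + d) = 0 by linear_combination e01) with h' | h'
    · exact h'
    · exact absurd h' htr
  have hc0 : c = 0 := by
    rcases mul_eq_zero.mp (show c * (a + d) = 0 by linear_combination e10) with h' | h'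
    · exact h'
    · exact absurd h' htr
  have ha2 : a * a = 1 := by linear_combination e00 - b * hc0
  have had : a * d = 1 := by linear_combination hdet + b * hc0
  have hane : a ≠ 0 := by
    intro h'; rw [h'] at ha2; simp at ha2
  have hda : d = a := by
    have h1 : a * d = a * a := by rw [ha2, had]
    exact mul_left_cancel₀ hane h1
  have h0 : (a - 1) * (a + 1) = 0 := by linear_combination ha2
  rcases mul_eq_zero.mp h0 with h' | h'
  · left
    have ha1 : a = 1 := by linear_combination h'
    have hd1 : d = 1 := by rw [hda, ha1]
    apply Subtype.ext
    ext i j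
    fin_cases i <;> fin_cases j
    · simpa using ha1
    · simpa using hb0
    · simpa using hc0
    · simpa using hd1
  · right
    have ha1 : a = -1 := by linear_combination h'
    have hd1 : d = -1 := by rw [hda, ha1]
    apply Subtype.ext
    rw [Matrix.SpecialLinearGroup.coe_neg]
    ext i j
    fin_cases i <;> fin_cases j
    · simpa using ha1
    · simpa using hb0
    · simpa using hc0
    · simpa using hd1

/-- If A² = -1 in SL(2,ℂ) then A has trace zero. -/
lemma trace_zero {A : SL2C} (h : A ^ 2 = -1) :
    (A : Matrix (Fin 2) (Fin 2) ℂ) 1 1 = -((A : Matrix (Fin 2) (Fin 2) ℂ) 0 0) := by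
  have hm : (A : Matrix (Fin 2) (Fin 2) ℂ) * A = -1 := by
    have := congrArg (Subtype.val) h
    simpa [pow_two, Matrix.SpecialLinearGroup.coe_neg] using this
  set a := (A : Matrix (Fin 2) (Fin 2) ℂ) 0 0 with ha
  set b := (A : Matrix (Fin 2) (Fin 2) ℂ) 0 1 with hb
  set c := (A : Matrix (Fin 2) (Fin 2) ℂ) 1 0 with hc
  set d := (A : Matrix (Fin 2) (Fin 2) ℂ) 1 1 with hd
  have hdet : a * d - b * c = 1 := by
    have := A.2
    rwa [Matrix.det_fin_two] at this
  have e00 : a * a + b * c = -1 := by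
    have := entry_eq hm 0 0
    simpa [Matrix.mul_apply, Fin.sum_univ_two, Matrix.one_apply] using this
  have e01 : a * b + b * d = 0 := by
    have := entry_eq hm 0 1
    simpa [Matrix.mul_apply, Fin.sum_univ_two, Matrix.one_apply] using this
  have e10 : c * a + d * c = 0 := by
    have := entry_eq hm 1 0
    simpa [Matrix.mul_apply, Fin.sum_univ_two, Matrix.one_apply] using this
  have e11 : c * b + d * d = -1 := by
    have := entry_eq hm 1 1
    simpa [Matrix.mul_apply, Fin.sum_univ_two, Matrix.one_apply] using this
  by_contra hne
  have htr : a + d ≠ 0 := fun h0 => hne (by linear_combination h0)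
  have hsq : (a + d) * (a + d) = 0 := by
    linear_combination e00 + e11 + 2 * hdet
  rcases mul_eq_zero.mp hsq with h' | h' <;> exact htr h'

/-- Core algebraic lemma: two commuting traceless SL₂ matrices are equal up to sign. -/
lemma key (a b c p q r : ℂ)
    (hA : -(a * a) - b * c = 1) (hB : -(p * p) - q * r = 1)
    (h1 : b * r = q * c) (h2 : a * q = b * p) (h3 : c * p = a * r) :
    (p = a ∧ q = b ∧ r = c) ∨ (p = -a ∧ q = -b ∧ r = -c) := by
  by_cases ha : a = 0
  · subst ha
    have hbc : b * c = -1 := by linear_combination -hA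
    have hb : b ≠ 0 := by
      intro h'; rw [h'] at hbc; simp at hbc
    have hp : p = 0 := by
      rcases mul_eq_zero.mp (show b * p = 0 by linear_combination -h2) with h' | h'
      · exact absurd h' hb
      · exact h'
    have hqr : q * r = -1 := by
      rw [hp] at hB; linear_combination -hB
    have hq2 : q * q = b * b := by
      linear_combination (-(b*b)) * hqr + b * q * h1 + (q*q) * hbc
    have h0 : (q - b) * (q + b) = 0 := by linear_combination hq2
    rcases mul_eq_zero.mp h0 with h' | h'
    · left
      have hqb : q = b := by linear_combination h'
      refine ⟨hp, hqb, ?_⟩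
      rw [hqb] at h1
      exact mul_left_cancel₀ hb h1
    · right
      have hqb : q = -b := by linear_combination h'
      refine ⟨by rw [hp]; ring, hqb, ?_⟩
      rw [hqb] at h1
      have hbr : b * r = b * (-c) := by linear_combination h1
      exact mul_left_cancel₀ hb hbr
  · have hp2 : p * p = a * a := by
      linear_combination (a*a) * hB - (p*p) * hA + c * p * h2 - a * q * h3
    have h0 : (p - a) * (p + a) = 0 := by linear_combination hp2
    rcases mul_eq_zero.mp h0 with h' | h'
    · left
      have hpa : p = a := by linear_combination h'
      refine ⟨hpa, ?_, ?_⟩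
      · rw [hpa] at h2
        have hq : a * q = a * b := by linear_combination h2
        exact mul_left_cancel₀ ha hq
      · rw [hpa] at h3
        have hr : a * r = a * c := by linear_combination -h3
        exact mul_left_cancel₀ ha hr
    · right
      have hpa : p = -a := by linear_combination h'
      refine ⟨hpa, ?_, ?_⟩
      · rw [hpa] at h2
        have hq : a * q = a * (-b) := by linear_combination h2
        exact mul_left_cancel₀ ha hq
      · rw [hpa] at h3
        have hr : a * r = a * (-c) := by linear_combination -h3
        exact mul_left_cancel₀ ha hr

/-- A lift of an order-2 element of PSL(2,ℂ) squares to -1. -/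
lemma lift_sq_eq_neg_one {α : PSL2C} (hα : orderOf α = 2) {A : SL2C}
    (hA : (QuotientGroup.mk A : PSL2C) = α) : A ^ 2 = -1 := by
  have hα2 : α ^ 2 = 1 := by
    have := pow_orderOf_eq_one α
    rwa [hα] at this
  have hαne : α ≠ 1 := by
    intro h'; rw [h', orderOf_one] at hα; norm_num at hα
  have hmk : (QuotientGroup.mk (A ^ 2) : PSL2C) = 1 := by
    have h : (QuotientGroup.mk (A ^ 2) : PSL2C) = (QuotientGroup.mk A : PSL2C) ^ 2 := rfl
    rw [h, hA, hα2]
  have hmem : A ^ 2 ∈ Subgroup.center SL2C := (QuotientGroup.eq_one_iff _).mp hmk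
  rcases center_cases hmem with h1 | h1
  · exfalso
    rcases sq_eq_one h1 with h' | h'
    · apply hαne
      rw [← hA, h']
      exact (QuotientGroup.eq_one_iff _).mpr (Subgroup.one_mem _)
    · apply hαne
      rw [← hA, h']
      exact (QuotientGroup.eq_one_iff _).mpr neg_one_mem_center
  · exact h1

end SL2Caux

open scoped commutatorElement

theorem commutator_of_lifts_eq_neg_one
    (α β : PSL2C) (hne : α ≠ β)
    (hα : orderOf α = 2) (hβ : orderOf β = 2) (hcomm : Commute α β)
    (A B : SL2C)
    (hA : (QuotientGroup.mk A : PSL2C) = α)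
    (hB : (QuotientGroup.mk B : PSL2C) = β) :
    ⁅A, B⁆ = (-1 : SL2C) := by
  open SL2Caux in
  have hA2 : A ^ 2 = -1 := lift_sq_eq_neg_one hα hA
  have hB2 : B ^ 2 = -1 := lift_sq_eq_neg_one hβ hB
  have hmk : (QuotientGroup.mk ⁅A, B⁆ : PSL2C) = 1 := by
    have h : (QuotientGroup.mk ⁅A, B⁆ : PSL2C)
        = ⁅(QuotientGroup.mk A : PSL2C), QuotientGroup.mk B⁆ := rfl
    rw [h, hA, hB]
    exact (commutatorElement_eq_one_iff_commute).mpr hcomm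
  have hmem : ⁅A, B⁆ ∈ Subgroup.center SL2C := (QuotientGroup.eq_one_iff _).mp hmk
  rcases center_cases hmem with h1 | h1
  · exfalso
    have hABcomm : A * B = B * A := commutatorElement_eq_one_iff_mul_comm.mp h1
    have hm : (A : Matrix (Fin 2) (Fin 2) ℂ) * B = (B : Matrix (Fin 2) (Fin 2) ℂ) * A := by
      have := congrArg Subtype.val hABcomm
      simpa using this
    set a := (A : Matrix (Fin 2) (Fin 2) ℂ) 0 0 with ha
    set b := (A : Matrix (Fin 2) (Fin 2) ℂ) 0 1 with hb
    set c := (A : Matrix (Fin 2) (Fin 2) ℂ) 1 0 with hc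
    set p := (B : Matrix (Fin 2) (Fin 2) ℂ) 0 0 with hp
    set q := (B : Matrix (Fin 2) (Fin 2) ℂ) 0 1 with hq
    set r := (B : Matrix (Fin 2) (Fin 2) ℂ) 1 0 with hr
    have htrA : (A : Matrix (Fin 2) (Fin 2) ℂ) 1 1 = -a := trace_zero hA2
    have htrB : (B : Matrix (Fin 2) (Fin 2) ℂ) 1 1 = -p := trace_zero hB2
    have hdetA : -(a * a) - b * c = 1 := by
      have hd := A.2
      rw [Matrix.det_fin_two] at hd
      rw [htrA] at hd
      linear_combination hd
    have hdetB : -(p * p) - q * r = 1 := by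
      have hd := B.2
      rw [Matrix.det_fin_two] at hd
      rw [htrB] at hd
      linear_combination hd
    have e00 := entry_eq hm 0 0
    have e01 := entry_eq hm 0 1
    have e10 := entry_eq hm 1 0
    simp only [Matrix.mul_apply, Fin.sum_univ_two] at e00 e01 e10
    simp only [htrA, htrB, ← ha, ← hb, ← hc, ← hp, ← hq, ← hr] at e00 e01 e10
    have h1' : b * r = q * c := by linear_combination e00
    have h2' : a * q = b * p := by linear_combination e01 / 2
    have h3' : c * p = a * r := by linear_combination e10 / 2
    rcases key a b c p q r hdetA hdetB h1' h2' h3' with ⟨hpp, hqq, hrr⟩ | ⟨hpp, hqq, hrr⟩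
    · have hBA : B = A := by
        apply Subtype.ext
        ext i j
        fin_cases i <;> fin_cases j
        · simpa using hpp
        · simpa using hqq
        · simpa using hrr
        · rw [show ((B : Matrix (Fin 2) (Fin 2) ℂ) ⟨1, by norm_num⟩ ⟨1, by norm_num⟩)
              = (B : Matrix (Fin 2) (Fin 2) ℂ) 1 1 from rfl,
            show ((A : Matrix (Fin 2) (Fin 2) ℂ) ⟨1, by norm_num⟩ ⟨1, by norm_num⟩)
              = (A : Matrix (Fin 2) (Fin 2) ℂ) 1 1 from rfl, htrA, htrB, hpp]
      exact hne (by rw [← hA, ← hB, hBA])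
    · have hBA : B = -A := by
        apply Subtype.ext
        rw [Matrix.SpecialLinearGroup.coe_neg]
        ext i j
        fin_cases i <;> fin_cases j
        · simpa using hpp
        · simpa using hqq
        · simpa using hrr
        · rw [show ((B : Matrix (Fin 2) (Fin 2) ℂ) ⟨1, by norm_num⟩ ⟨1, by norm_num⟩)
              = (B : Matrix (Fin 2) (Fin 2) ℂ) 1 1 from rfl]
          rw [show ((-(A : Matrix (Fin 2) (Fin 2) ℂ)) ⟨1, by norm_num⟩ ⟨1, by norm_num⟩)
              = -((A : Matrix (Fin 2) (Fin 2) ℂ) 1 1) from rfl, htrA, htrB, hpp]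
      exact hne (by rw [← hA, ← hB, hBA, mk_neg])
  · exact h1
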